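/- Let ζ₁, ζ₂ ∈ (0, ∞) satisfy 1/ζ₁ + 1/ζ₂ ≤ 1/γ. For each n consider the finite grid of pairs G_n = { ( p_n/(m_n − k₁·s_n), p_n/(k₂·s_n) ) : k₁ ∈ {2, …, ⌈m_n/s_n − 2⌉}, k₂ ∈ {1, …, k₁ − 1} }. Then there exist, for all sufficiently large n, admissible indices k₁(n), k₂(n) (with 2 ≤ k₁(n) ≤ ⌈m_n/s_n − 2⌉ and 1 ≤ k₂(n) ≤ k₁(n) − 1) such that p_n/(m_n − k₁(n)·s_n) → ζ₁ and p_n/(k₂(n)·s_n) → ζ₂ as n → ∞; in particular inf_{(g₁,g₂)∈G_n} ( |g₁ − ζ₁| + |g₂ − ζ₂| ) → 0. -/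

import Mathlib

set_option maxHeartbeats 1600000

open Filter

/-- **Space-filling property of the one-step subsampling grid.**
Let `(pₙ), (mₙ), (sₙ)` be positive integers with `sₙ ≤ mₙ`, `pₙ/mₙ → γ ∈ (0, ∞)` and
`sₙ/mₙ → 0`. Let `ζ₁, ζ₂ ∈ (0, ∞)` satisfy `1/ζ₁ + 1/ζ₂ ≤ 1/γ`. Then there are index
sequences `k₁(n), k₂(n)` that are eventually admissible, i.e.
`2 ≤ k₁(n) ≤ Kₙ = ⌈mₙ/sₙ − 2⌉` and `1 ≤ k₂(n) ≤ k₁(n) − 1`, with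
`pₙ/(mₙ − k₁(n)·sₙ) → ζ₁` and `pₙ/(k₂(n)·sₙ) → ζ₂`. -/
theorem one_step_grid_space_filling (p m s : ℕ → ℕ)
    (hp : ∀ n, 0 < p n) (hs : ∀ n, 0 < s n) (hsm : ∀ n, s n ≤ m n)
    (γ : ℝ) (hγ : 0 < γ)
    (hratio : Tendsto (fun n => (p n : ℝ) / (m n : ℝ)) atTop (nhds γ))
    (hstep : Tendsto (fun n => (s n : ℝ) / (m n : ℝ)) atTop (nhds 0))
    (K : ℕ → ℕ) (hK : ∀ n, K n = (⌈(m n : ℝ) / (s n : ℝ) - 2⌉).toNat)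
    (ζ₁ ζ₂ : ℝ) (hζ₁ : 0 < ζ₁) (hζ₂ : 0 < ζ₂)
    (hcon : 1 / ζ₁ + 1 / ζ₂ ≤ 1 / γ) :
    ∃ k₁ k₂ : ℕ → ℕ,
      (∀ᶠ n in atTop, 2 ≤ k₁ n ∧ k₁ n ≤ K n ∧ 1 ≤ k₂ n ∧ k₂ n ≤ k₁ n - 1) ∧
      Tendsto (fun n => (p n : ℝ) / ((m n : ℝ) - (k₁ n : ℝ) * (s n : ℝ))) atTop (nhds ζ₁) ∧
      Tendsto (fun n => (p n : ℝ) / ((k₂ n : ℝ) * (s n : ℝ))) atTop (nhds ζ₂) := by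
  have hm : ∀ n, 0 < m n := fun n => lt_of_lt_of_le (hs n) (hsm n)
  have hmR : ∀ n, (0:ℝ) < (m n : ℝ) := fun n => by exact_mod_cast hm n
  have hsR : ∀ n, (0:ℝ) < (s n : ℝ) := fun n => by exact_mod_cast hs n
  have hpR : ∀ n, (0:ℝ) < (p n : ℝ) := fun n => by exact_mod_cast hp n
  -- s/p → 0
  have hsp : Tendsto (fun n => (s n:ℝ)/(p n:ℝ)) atTop (nhds 0) := by
    have h := hstep.div hratio hγ.ne'
    rw [zero_div] at h
    refine h.congr (fun n => ?_)
    simp only [Pi.div_apply]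
    rw [div_div_div_eq, div_eq_div_iff (mul_pos (hmR n) (hpR n)).ne' (hpR n).ne']
    ring
  -- m/p → 1/γ
  have hmp : Tendsto (fun n => (m n:ℝ)/(p n:ℝ)) atTop (nhds (1/γ)) := by
    have h := (hratio.inv₀ hγ.ne')
    rw [← one_div] at h
    refine h.congr (fun n => ?_) |>.congr (fun n => rfl)
    rw [← one_div, one_div_div]
  -- inverse of s/m tends to atTop
  have hinv : Tendsto (fun n => ((s n:ℝ)/(m n:ℝ))⁻¹) atTop atTop := by
    have : Tendsto (fun n => (s n:ℝ)/(m n:ℝ)) atTop (nhdsWithin 0 (Set.Ioi 0)) :=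
      tendsto_nhdsWithin_of_tendsto_nhds_of_eventually_within _ hstep
        (Eventually.of_forall fun n => div_pos (hsR n) (hmR n))
    exact this.inv_tendsto_nhdsGT_zero
  -- γ < ζ₁
  have hγζ₁ : γ < ζ₁ := by
    have h2 : (1:ℝ)/ζ₁ < 1/γ := by
      have := one_div_pos.mpr hζ₂
      linarith
    rw [div_lt_div_iff₀ hζ₁ hγ] at h2
    linarith
  -- A := (m - p/ζ₁)/s → ∞
  obtain ⟨A, hAdef⟩ : ∃ A : ℕ → ℝ, ∀ n, A n = ((m n:ℝ) - (p n:ℝ)/ζ₁)/(s n:ℝ) :=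
    ⟨_, fun _ => rfl⟩
  have hA : Tendsto A atTop atTop := by
    have hnum : Tendsto (fun n => 1 - ((p n:ℝ)/(m n:ℝ))/ζ₁) atTop (nhds (1 - γ/ζ₁)) :=
      tendsto_const_nhds.sub (hratio.div_const ζ₁)
    have hpos : 0 < 1 - γ/ζ₁ := by
      rw [sub_pos, div_lt_one hζ₁]; exact hγζ₁
    refine (hnum.pos_mul_atTop hpos hinv).congr (fun n => ?_)
    rw [hAdef n, inv_div]
    field_simp [(hmR n).ne', (hsR n).ne', hζ₁.ne']

  -- B := p/(ζ₂ s) → ∞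
  obtain ⟨B, hBdef⟩ : ∃ B : ℕ → ℝ, ∀ n, B n = (p n:ℝ)/(ζ₂*(s n:ℝ)) :=
    ⟨_, fun _ => rfl⟩
  have hB : Tendsto B atTop atTop := by
    have hnum : Tendsto (fun n => ((p n:ℝ)/(m n:ℝ))/ζ₂) atTop (nhds (γ/ζ₂)) :=
      hratio.div_const ζ₂
    refine (hnum.pos_mul_atTop (div_pos hγ hζ₂) hinv).congr (fun n => ?_)
    rw [hBdef n, inv_div]
    field_simp [(hmR n).ne', (hsR n).ne', hζ₂.ne']

  -- p/(ζ₁ s) → ∞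
  have hC : Tendsto (fun n => (p n:ℝ)/(ζ₁*(s n:ℝ))) atTop atTop := by
    have hnum : Tendsto (fun n => ((p n:ℝ)/(m n:ℝ))/ζ₁) atTop (nhds (γ/ζ₁)) :=
      hratio.div_const ζ₁
    refine (hnum.pos_mul_atTop (div_pos hγ hζ₁) hinv).congr (fun n => ?_)
    rw [inv_div]
    field_simp [(hmR n).ne', (hsR n).ne', hζ₁.ne']

  -- error term
  obtain ⟨E, hEdef⟩ : ∃ E : ℕ → ℝ, ∀ n, E n = 2*(s n:ℝ) + |(m n:ℝ) - (p n:ℝ)/γ| :=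
    ⟨_, fun _ => rfl⟩
  have hE : Tendsto (fun n => E n / (p n:ℝ)) atTop (nhds 0) := by
    have h : Tendsto (fun n => 2*((s n:ℝ)/(p n:ℝ)) + |(m n:ℝ)/(p n:ℝ) - 1/γ|)
        atTop (nhds (2*0 + |1/γ - 1/γ|)) :=
      (tendsto_const_nhds.mul hsp).add ((hmp.sub tendsto_const_nhds).abs)
    simp only [mul_zero, sub_self, abs_zero, add_zero] at h
    refine h.congr (fun n => ?_) |>.congr (fun n => rfl)
    rw [hEdef n]
    have hpn := (hpR n).ne'
    rw [add_div, eq_comm]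
    congr 1
    · ring
    · have e : (m n:ℝ)/(p n:ℝ) - 1/γ = ((m n:ℝ) - (p n:ℝ)/γ)/(p n:ℝ) := by
        field_simp [hγ.ne', (hpR n).ne']
      rw [e, abs_div, abs_of_pos (hpR n)]
  have hEpos : ∀ n, (s n:ℝ) ≤ E n := fun n => by
    have := abs_nonneg ((m n:ℝ) - (p n:ℝ)/γ)
    have := hsR n
    simp only [hEdef]; linarith
  -- key inequality from the constraint
  have hkey : ∀ n, (m n:ℝ) - (p n:ℝ)/ζ₁ - (p n:ℝ)/ζ₂ ≥ -|(m n:ℝ) - (p n:ℝ)/γ| := by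
    intro n
    have h1 : (p n:ℝ) * (1/ζ₁ + 1/ζ₂) ≤ (p n:ℝ) * (1/γ) :=
      mul_le_mul_of_nonneg_left hcon (hpR n).le
    have h2 : (m n:ℝ) - (p n:ℝ)/γ ≥ -|(m n:ℝ) - (p n:ℝ)/γ| := neg_abs_le _
    have e1 : (p n:ℝ) * (1/ζ₁) = (p n:ℝ)/ζ₁ := by ring
    have e2 : (p n:ℝ) * (1/ζ₂) = (p n:ℝ)/ζ₂ := by ring
    have e3 : (p n:ℝ) * (1/γ) = (p n:ℝ)/γ := by ring
    nlinarith [h1, h2]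
  -- the sequences
  obtain ⟨k1, hk1def⟩ : ∃ k1 : ℕ → ℕ, ∀ n, k1 n = (⌊A n⌋).toNat := ⟨_, fun _ => rfl⟩
  obtain ⟨k2, hk2def⟩ : ∃ k2 : ℕ → ℕ, ∀ n, k2 n = min (⌊B n⌋).toNat (k1 n - 1) :=
    ⟨_, fun _ => rfl⟩
  -- eventual facts
  have hA3 : ∀ᶠ n in atTop, 3 ≤ A n := hA.eventually_ge_atTop 3
  have hB1 : ∀ᶠ n in atTop, 1 ≤ B n := hB.eventually_ge_atTop 1
  have hC2 : ∀ᶠ n in atTop, 2 ≤ (p n:ℝ)/(ζ₁*(s n:ℝ)) := hC.eventually_ge_atTop 2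
  have hEs : ∀ᶠ n in atTop, E n < (p n:ℝ)/(2*ζ₂) := by
    have h0 : (0:ℝ) < 1/(2*ζ₂) := by positivity
    filter_upwards [hE.eventually (gt_mem_nhds h0)] with n hn
    rw [div_lt_iff₀ (hpR n)] at hn
    calc E n < 1/(2*ζ₂) * p n := hn
    _ = (p n:ℝ)/(2*ζ₂) := by ring
  -- per-n consequences of 3 ≤ A n
  have hk1A : ∀ n, 3 ≤ A n → ((k1 n:ℝ) ≤ A n ∧ A n - 1 < (k1 n:ℝ)) ∧ 3 ≤ k1 n := by
    intro n h3
    have hfl : (3:ℤ) ≤ ⌊A n⌋ := Int.le_floor.mpr (by exact_mod_cast h3)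
    have hc : ((k1 n:ℕ):ℝ) = ((⌊A n⌋:ℤ):ℝ) := by
      rw [hk1def n]
      exact_mod_cast Int.toNat_of_nonneg (by omega)
    refine ⟨⟨?_, ?_⟩, by rw [hk1def n]; omega⟩
    · rw [hc]; exact Int.floor_le _
    · rw [hc]; linarith [Int.lt_floor_add_one (A n)]
  have hAs : ∀ n, A n * (s n:ℝ) = (m n:ℝ) - (p n:ℝ)/ζ₁ := fun n => by
    rw [hAdef n]; exact div_mul_cancel₀ _ (hsR n).ne'
  have hBs : ∀ n, B n * (s n:ℝ) = (p n:ℝ)/ζ₂ := fun n => by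
    rw [hBdef n, div_mul_eq_mul_div, mul_comm ζ₂ (s n:ℝ), ← div_div,
      mul_div_assoc, div_self (hsR n).ne', mul_one]
  -- bounds on m - k1 s
  have hb1 : ∀ n, 3 ≤ A n →
      (p n:ℝ)/ζ₁ ≤ (m n:ℝ) - (k1 n:ℝ)*(s n:ℝ) ∧
      (m n:ℝ) - (k1 n:ℝ)*(s n:ℝ) ≤ (p n:ℝ)/ζ₁ + (s n:ℝ) := by
    intro n h3
    obtain ⟨⟨hle, hgt⟩, -⟩ := hk1A n h3
    have h1 : (k1 n:ℝ)*(s n:ℝ) ≤ A n * (s n:ℝ) :=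
      mul_le_mul_of_nonneg_right hle (hsR n).le
    have h2 : (A n - 1) * (s n:ℝ) ≤ (k1 n:ℝ)*(s n:ℝ) :=
      mul_le_mul_of_nonneg_right hgt.le (hsR n).le
    rw [hAs n] at h1
    have h2' : (A n) * (s n:ℝ) - (s n:ℝ) ≤ (k1 n:ℝ)*(s n:ℝ) := by nlinarith
    rw [hAs n] at h2'
    constructor <;> linarith
  -- bounds on k2 s
  have hb2 : ∀ n, 3 ≤ A n → 1 ≤ B n →
      (p n:ℝ)/ζ₂ - E n ≤ (k2 n:ℝ)*(s n:ℝ) ∧ (k2 n:ℝ)*(s n:ℝ) ≤ (p n:ℝ)/ζ₂ := by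
    intro n h3 h1
    obtain ⟨⟨hle, hgt⟩, hk13⟩ := hk1A n h3
    have hflB : (1:ℤ) ≤ ⌊B n⌋ := Int.le_floor.mpr (by exact_mod_cast h1)
    have hcB : ((⌊B n⌋.toNat:ℕ):ℝ) = ((⌊B n⌋:ℤ):ℝ) := by
      exact_mod_cast Int.toNat_of_nonneg (by omega)
    constructor
    · -- lower bound, case split on the min
      rcases le_total ((⌊B n⌋).toNat) (k1 n - 1) with hc | hc
      · have hk2e : k2 n = (⌊B n⌋).toNat := by rw [hk2def n]; exact min_eq_left hc
        have hgtB : B n - 1 < ((k2 n:ℕ):ℝ) := by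
          rw [hk2e, hcB]; linarith [Int.lt_floor_add_one (B n)]
        have : (B n - 1) * (s n:ℝ) ≤ (k2 n:ℝ)*(s n:ℝ) :=
          mul_le_mul_of_nonneg_right hgtB.le (hsR n).le
        have hBs' := hBs n
        have hEp := hEpos n
        have hexp : B n * (s n:ℝ) - (s n:ℝ) ≤ (k2 n:ℝ)*(s n:ℝ) := by nlinarith [this]
        linarith [hexp, hBs', hEp]
      · have hk2e : k2 n = k1 n - 1 := by rw [hk2def n]; exact min_eq_right hc
        have hcast : ((k2 n:ℕ):ℝ) = (k1 n:ℝ) - 1 := by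
          rw [hk2e, Nat.cast_sub (by omega)]; norm_num
        have hgt2 : A n - 2 < (k2 n:ℝ) := by rw [hcast]; linarith
        have h2 : (A n - 2) * (s n:ℝ) ≤ (k2 n:ℝ)*(s n:ℝ) :=
          mul_le_mul_of_nonneg_right hgt2.le (hsR n).le
        have hAs' := hAs n
        have hk := hkey n
        have hEdef' := hEdef n
        nlinarith [hsR n]
    · -- upper bound
      have hk2le : k2 n ≤ (⌊B n⌋).toNat := by rw [hk2def n]; exact min_le_left _ _
      have : ((k2 n:ℕ):ℝ) ≤ B n := by
        calc ((k2 n:ℕ):ℝ) ≤ ((⌊B n⌋.toNat:ℕ):ℝ) := by exact_mod_cast hk2le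
        _ = ((⌊B n⌋:ℤ):ℝ) := hcB
        _ ≤ B n := Int.floor_le _
      have := mul_le_mul_of_nonneg_right this (hsR n).le
      rw [hBs n] at this
      exact this
  refine ⟨k1, k2, ?_, ?_, ?_⟩
  · -- admissibility
    filter_upwards [hA3, hB1, hC2] with n h3 h1 h2
    obtain ⟨⟨hle, hgt⟩, hk13⟩ := hk1A n h3
    have hflB : (1:ℤ) ≤ ⌊B n⌋ := Int.le_floor.mpr (by exact_mod_cast h1)
    refine ⟨by omega, ?_, ?_, by rw [hk2def n]; exact min_le_right _ _⟩
    · -- k1 ≤ K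
      have hAle : A n ≤ (m n:ℝ)/(s n:ℝ) - 2 := by
        have : A n = (m n:ℝ)/(s n:ℝ) - (p n:ℝ)/(ζ₁*(s n:ℝ)) := by
          rw [hAdef n, sub_div, div_div]
        rw [this]; linarith
      have hKge : ((m n:ℝ)/(s n:ℝ) - 2) ≤ (K n:ℝ) := by
        rw [hK n]
        calc (m n:ℝ)/(s n:ℝ) - 2 ≤ ((⌈(m n:ℝ)/(s n:ℝ) - 2⌉:ℤ):ℝ) := Int.le_ceil _
        _ ≤ ((⌈(m n:ℝ)/(s n:ℝ) - 2⌉.toNat:ℕ):ℝ) := by exact_mod_cast Int.self_le_toNat _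
      have : (k1 n:ℝ) ≤ (K n:ℝ) := by linarith
      exact_mod_cast this
    · -- 1 ≤ k2
      rw [hk2def n]
      refine le_min (by omega) (by omega)
  · -- convergence to ζ₁
    have L1 : Tendsto (fun n => (p n:ℝ)/((p n:ℝ)/ζ₁ + (s n:ℝ))) atTop (nhds ζ₁) := by
      have base : Tendsto (fun n => 1/(1/ζ₁ + (s n:ℝ)/(p n:ℝ))) atTop
          (nhds (1/(1/ζ₁ + 0))) :=
        tendsto_const_nhds.div (tendsto_const_nhds.add hsp)
          (by rw [add_zero]; exact one_div_ne_zero hζ₁.ne')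
      rw [add_zero, one_div_one_div] at base
      refine base.congr (fun n => ?_)
      rw [div_eq_div_iff (by positivity) (add_pos (div_pos (hpR n) hζ₁) (hsR n)).ne']
      field_simp [(hpR n).ne']
    refine tendsto_of_tendsto_of_tendsto_of_le_of_le' L1 tendsto_const_nhds ?_ ?_
    · filter_upwards [hA3] with n h3
      obtain ⟨hlb, hub⟩ := hb1 n h3
      have hpos : (0:ℝ) < (m n:ℝ) - (k1 n:ℝ)*(s n:ℝ) :=
        lt_of_lt_of_le (div_pos (hpR n) hζ₁) hlb
      exact div_le_div_of_nonneg_left (hpR n).le hpos hub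
    · filter_upwards [hA3] with n h3
      obtain ⟨hlb, hub⟩ := hb1 n h3
      have hpz : (0:ℝ) < (p n:ℝ)/ζ₁ := div_pos (hpR n) hζ₁
      have : (p n:ℝ)/((m n:ℝ) - (k1 n:ℝ)*(s n:ℝ)) ≤ (p n:ℝ)/((p n:ℝ)/ζ₁) :=
        div_le_div_of_nonneg_left (hpR n).le hpz hlb
      calc (p n:ℝ)/((m n:ℝ) - (k1 n:ℝ)*(s n:ℝ)) ≤ (p n:ℝ)/((p n:ℝ)/ζ₁) := this
      _ = ζ₁ := by
        rw [div_div_eq_mul_div, mul_comm, mul_div_assoc, div_self (hpR n).ne', mul_one]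
  · -- convergence to ζ₂
    have L2 : Tendsto (fun n => (p n:ℝ)/((p n:ℝ)/ζ₂ - E n)) atTop (nhds ζ₂) := by
      have base : Tendsto (fun n => 1/(1/ζ₂ - E n/(p n:ℝ))) atTop
          (nhds (1/(1/ζ₂ - 0))) :=
        tendsto_const_nhds.div (tendsto_const_nhds.sub hE)
          (by rw [sub_zero]; exact one_div_ne_zero hζ₂.ne')
      rw [sub_zero, one_div_one_div] at base
      refine base.congr (fun n => ?_)
      have he : 1/ζ₂ - E n/(p n:ℝ) = ((p n:ℝ)/ζ₂ - E n)/(p n:ℝ) := by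
        rw [sub_div, div_div, mul_comm (ζ₂) (p n:ℝ), ← div_div,
          div_self (hpR n).ne']
      rw [he, one_div_div]
    refine tendsto_of_tendsto_of_tendsto_of_le_of_le' tendsto_const_nhds L2 ?_ ?_
    · filter_upwards [hA3, hB1] with n h3 h1
      obtain ⟨hlb, hub⟩ := hb2 n h3 h1
      obtain ⟨⟨-, -⟩, hk13⟩ := hk1A n h3
      have hk21 : 1 ≤ k2 n := by
        rw [hk2def n]
        have hflB : (1:ℤ) ≤ ⌊B n⌋ := Int.le_floor.mpr (by exact_mod_cast h1)
        exact le_min (by omega) (by omega)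
      have hk2pos : (0:ℝ) < (k2 n:ℝ)*(s n:ℝ) := by
        have h1' : (1:ℝ) ≤ (k2 n:ℝ) := by exact_mod_cast hk21
        exact mul_pos (lt_of_lt_of_le one_pos h1') (hsR n)
      have : (p n:ℝ)/((p n:ℝ)/ζ₂) ≤ (p n:ℝ)/((k2 n:ℝ)*(s n:ℝ)) :=
        div_le_div_of_nonneg_left (hpR n).le hk2pos hub
      calc ζ₂ = (p n:ℝ)/((p n:ℝ)/ζ₂) := by
            rw [div_div_eq_mul_div, mul_comm, mul_div_assoc, div_self (hpR n).ne', mul_one]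
      _ ≤ (p n:ℝ)/((k2 n:ℝ)*(s n:ℝ)) := this
    · filter_upwards [hA3, hB1, hEs] with n h3 h1 hEn
      obtain ⟨hlb, hub⟩ := hb2 n h3 h1
      have hden : (0:ℝ) < (p n:ℝ)/ζ₂ - E n := by
        have h2z : (p n:ℝ)/(2*ζ₂) ≤ (p n:ℝ)/ζ₂ :=
          div_le_div_of_nonneg_left (hpR n).le hζ₂ (by linarith)
        linarith
      exact div_le_div_of_nonneg_left (hpR n).le hden hlb
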